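/- The Majumdar–Dhar map σ_G is a bijection between the set of allowed stable configurations A_G and the set of spanning trees T_G of a finite connected multigraph G with sink s. -/
import Mathlib


open Set

noncomputable section

/-- Number of oriented edges with tail `x` (the degree of `x` in the multigraph). -/
def degD {Vp D : Type*} (tl : D → Vp) (x : Vp) : ℕ := {e : D | tl e = x}.ncard

/-- Unburnt sets of the Burning Algorithm: `U 0 = V⁺ \ {s}` and
`U (n+1) = {v ∈ U n : η v < deg_{U n} v}`. -/
def Up {Vp D : Type*} (tl hd : D → Vp) (s : Vp) (η : Vp → ℕ) : ℕ → Set Vp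
  | 0 => {v | v ≠ s}
  | n + 1 => {v ∈ Up tl hd s η n |
      η v < Set.ncard {e : D | tl e = v ∧ hd e ∈ Up tl hd s η n}}

/-- Burning sets: `B 0 = {s}` and `B (n+1) = {v ∈ U n : η v ≥ deg_{U n} v}`. -/
def Bp {Vp D : Type*} (tl hd : D → Vp) (s : Vp) (η : Vp → ℕ) : ℕ → Set Vp
  | 0 => {s}
  | n + 1 => {v ∈ Up tl hd s η n |
      Set.ncard {e : D | tl e = v ∧ hd e ∈ Up tl hd s η n} ≤ η v}

/-- `P_x`: the set of oriented edges from `x` to the set burning at time `i − 1`. -/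
def PsetB {Vp D : Type*} (tl hd : D → Vp) (s : Vp) (η : Vp → ℕ) (i : ℕ) (x : Vp) :
    Set D :=
  {e : D | tl e = x ∧ hd e ∈ Bp tl hd s η (i - 1)}

/-- `n_x`: the number of edges from `x` to vertices burnt strictly before time `i`. -/
def nBefore {Vp D : Type*} (tl hd : D → Vp) (s : Vp) (η : Vp → ℕ) (i : ℕ) (x : Vp) :
    ℕ :=
  Set.ncard {e : D | tl e = x ∧ hd e ∉ Up tl hd s η (i - 1)}

/-- Stability of a configuration. -/
def StableD {Vp D : Type*} (tl : D → Vp) (s : Vp) (η : Vp → ℕ) : Prop :=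
  ∀ v : Vp, v ≠ s → η v < degD tl v

/-- `η` is allowed: no nonempty set of non-sink vertices is a forbidden
subconfiguration. -/
def AllowedD {Vp D : Type*} (tl hd : D → Vp) (s : Vp) (η : Vp → ℕ) : Prop :=
  ∀ F : Set Vp, F.Nonempty → (∀ v ∈ F, v ≠ s) →
    ¬ (∀ v ∈ F, η v < Set.ncard {e : D | tl e = v ∧ hd e ∈ F})

/-- `t` is the spanning tree `σ_G(η)` of the Majumdar–Dhar construction: for every
vertex `x` burning at time `i ≥ 1`, the tree edge `t x` belongs to `P_x` (it points
to a vertex burning at time `i − 1`) and is the edge `α_{P_x,K_x}⁻¹(η x)`, i.e.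
`α_{P_x,K_x}(t x) = η x` where `K_x` starts at `deg_G x − n_x`. -/
def IsMDTree {Vp D : Type*} (tl hd : D → Vp) (s : Vp)
    (α : Vp → Set D → ℕ → D → ℕ) (η : Vp → ℕ)
    (t : {x : Vp // x ≠ s} → D) : Prop :=
  ∀ i : ℕ, 1 ≤ i → ∀ x : {x : Vp // x ≠ s}, x.val ∈ Bp tl hd s η i →
    t x ∈ PsetB tl hd s η i x.val ∧
    α x.val (PsetB tl hd s η i x.val)
      (degD tl x.val - nBefore tl hd s η i x.val) (t x) = η x.val

/-- `t` encodes a spanning tree of `G` rooted at the sink: every non-sink vertex `x`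
has exactly one outgoing tree edge `t x` (with tail `x`), and following the tree edges
from any vertex leads to the sink `s`. -/
def IsSpanTreeMap {Vp D : Type*} (tl hd : D → Vp) (s : Vp)
    (t : {x : Vp // x ≠ s} → D) : Prop :=
  (∀ x : {x : Vp // x ≠ s}, tl (t x) = x.val) ∧
  ∀ v : Vp, Relation.ReflTransGen
    (fun u w => ∃ h : u ≠ s, hd (t ⟨u, h⟩) = w) v s

namespace MDaux

set_option linter.unusedSectionVars false

variable {Vp D : Type*} [Fintype Vp] [Fintype D]
variable (tl hd : D → Vp) (s : Vp) (η : Vp → ℕ)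

lemma mem_Up_succ {v : Vp} {n : ℕ} :
    v ∈ Up tl hd s η (n + 1) ↔ v ∈ Up tl hd s η n ∧
      η v < Set.ncard {e : D | tl e = v ∧ hd e ∈ Up tl hd s η n} := Iff.rfl

lemma mem_Bp_succ {v : Vp} {n : ℕ} :
    v ∈ Bp tl hd s η (n + 1) ↔ v ∈ Up tl hd s η n ∧
      Set.ncard {e : D | tl e = v ∧ hd e ∈ Up tl hd s η n} ≤ η v := Iff.rfl

lemma Up_succ_subset (n : ℕ) : Up tl hd s η (n + 1) ⊆ Up tl hd s η n :=
  fun _ hv => hv.1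

lemma Up_antitone {m n : ℕ} (h : m ≤ n) : Up tl hd s η n ⊆ Up tl hd s η m := by
  induction n with
  | zero => simp_all
  | succ k ih =>
    rcases Nat.eq_or_lt_of_le h with rfl | h'
    · exact fun _ h => h
    · exact (Up_succ_subset tl hd s η k).trans (ih (Nat.lt_succ_iff.mp h'))

lemma ne_s_of_mem_Up {v : Vp} {n : ℕ} (h : v ∈ Up tl hd s η n) : v ≠ s :=
  Up_antitone tl hd s η (Nat.zero_le n) h

lemma notMem_Up_of_mem_Bp {v : Vp} {n : ℕ} (h : v ∈ Bp tl hd s η (n + 1)) :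
    v ∉ Up tl hd s η (n + 1) := fun h' => absurd h'.2 (not_lt.mpr h.2)

lemma ne_s_of_mem_Bp {v : Vp} {i : ℕ} (hi : 1 ≤ i) (h : v ∈ Bp tl hd s η i) : v ≠ s := by
  obtain ⟨k, rfl⟩ := Nat.exists_eq_add_of_le' hi
  exact ne_s_of_mem_Up tl hd s η h.1

lemma burn_unique {v : Vp} {i j : ℕ} (hi : 1 ≤ i) (hj : 1 ≤ j)
    (hvi : v ∈ Bp tl hd s η i) (hvj : v ∈ Bp tl hd s η j) : i = j := by
  by_contra hne
  wlog hlt : i < j generalizing i j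
  · exact this hj hi hvj hvi (Ne.symm hne) (by omega)
  obtain ⟨k, rfl⟩ := Nat.exists_eq_add_of_le' hi
  obtain ⟨m, rfl⟩ := Nat.exists_eq_add_of_le' hj
  exact notMem_Up_of_mem_Bp tl hd s η hvi
    (Up_antitone tl hd s η (by omega) hvj.1)

lemma Up_empty_of_allowed (hA : AllowedD tl hd s η) :
    ∃ N, Up tl hd s η N = ∅ := by
  by_contra hne
  push_neg at hne
  have hstep : ∀ n, Up tl hd s η (n + 1) ⊂ Up tl hd s η n := by
    intro n
    refine (Up_succ_subset tl hd s η n).ssubset_of_ne ?_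
    intro heq
    refine hA (Up tl hd s η n) (hne n)
      (fun v hv => ne_s_of_mem_Up tl hd s η hv) ?_
    intro v hv
    have : v ∈ Up tl hd s η (n + 1) := heq ▸ hv
    exact this.2
  have hmono : ∀ n, (Up tl hd s η n).ncard + n ≤ (Up tl hd s η 0).ncard := by
    intro n
    induction n with
    | zero => omega
    | succ k ih =>
      have := Set.ncard_lt_ncard (hstep k) (Set.toFinite _)
      omega
  have := hmono ((Up tl hd s η 0).ncard + 1)
  omega

lemma burn_exists (hA : AllowedD tl hd s η) {v : Vp} (hv : v ≠ s) :
    ∃ i, 1 ≤ i ∧ v ∈ Bp tl hd s η i := by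
  classical
  obtain ⟨N, hN⟩ := Up_empty_of_allowed tl hd s η hA
  have hex : ∃ n, v ∉ Up tl hd s η n := ⟨N, by simp [hN]⟩
  have hnot : v ∉ Up tl hd s η (Nat.find hex) := Nat.find_spec hex
  have hi1 : 1 ≤ Nat.find hex := by
    rcases Nat.eq_zero_or_pos (Nat.find hex) with h0 | h
    · exact absurd (show v ∈ Up tl hd s η 0 from hv) (h0 ▸ hnot)
    · exact h
  obtain ⟨k, hk⟩ := Nat.exists_eq_add_of_le' hi1
  have hmem : v ∈ Up tl hd s η k := by
    by_contra h
    have := Nat.find_le (h := hex) h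
    omega
  refine ⟨k + 1, by omega, ?_⟩
  rw [mem_Bp_succ]
  refine ⟨hmem, ?_⟩
  by_contra hlt
  exact (hk ▸ hnot) ⟨hmem, not_le.mp hlt⟩

lemma ncard_cond_split (v : Vp) (p : Vp → Prop) :
    degD tl v = Set.ncard {e : D | tl e = v ∧ p (hd e)} +
      Set.ncard {e : D | tl e = v ∧ ¬ p (hd e)} := by
  classical
  rw [degD, ← Set.ncard_union_eq ?_ (Set.toFinite _) (Set.toFinite _)]
  · congr 1
    ext e
    by_cases h : p (hd e) <;> simp [h]
  · rw [Set.disjoint_left]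
    rintro e ⟨-, hp⟩ ⟨-, hnp⟩
    exact hnp hp

lemma ncard_cond_split2 (v : Vp) (p q : Vp → Prop) (hpq : ∀ w, p w → q w → False) :
    Set.ncard {e : D | tl e = v ∧ (p (hd e) ∨ q (hd e))} =
      Set.ncard {e : D | tl e = v ∧ p (hd e)} +
      Set.ncard {e : D | tl e = v ∧ q (hd e)} := by
  classical
  rw [← Set.ncard_union_eq ?_ (Set.toFinite _) (Set.toFinite _)]
  · congr 1
    ext e
    simp only [Set.mem_setOf_eq, Set.mem_union]
    tauto
  · rw [Set.disjoint_left]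
    rintro e ⟨-, hp⟩ ⟨-, hq⟩
    exact hpq _ hp hq

lemma mem_Up_iff_or {w : Vp} {k : ℕ} :
    w ∈ Up tl hd s η k ↔ w ∈ Up tl hd s η (k + 1) ∨ w ∈ Bp tl hd s η (k + 1) := by
  constructor
  · intro h
    rcases lt_or_ge (η w) (Set.ncard {e : D | tl e = w ∧ hd e ∈ Up tl hd s η k}) with h' | h'
    · exact Or.inl ⟨h, h'⟩
    · exact Or.inr ⟨h, h'⟩
  · rintro (h | h) <;> exact h.1

lemma key_count (hS : StableD tl s η) {k : ℕ} {v : Vp} (hv : v ∈ Bp tl hd s η (k + 1)) :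
    degD tl v = nBefore tl hd s η (k + 1) v +
        Set.ncard {e : D | tl e = v ∧ hd e ∈ Up tl hd s η k} ∧
    Set.ncard {e : D | tl e = v ∧ hd e ∈ Up tl hd s η k} ≤ η v ∧
    η v < Set.ncard {e : D | tl e = v ∧ hd e ∈ Up tl hd s η k} +
        (PsetB tl hd s η (k + 1) v).ncard := by
  have hvs : v ≠ s := ne_s_of_mem_Up tl hd s η hv.1
  have hsplit := ncard_cond_split tl hd (v := v) (p := fun w => w ∈ Up tl hd s η k)
  have hnB : nBefore tl hd s η (k + 1) v =
      Set.ncard {e : D | tl e = v ∧ ¬ hd e ∈ Up tl hd s η k} := by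
    simp [nBefore]
  refine ⟨by omega, hv.2, ?_⟩
  have hP : PsetB tl hd s η (k + 1) v = {e : D | tl e = v ∧ hd e ∈ Bp tl hd s η k} := by
    simp [PsetB]
  cases k with
  | zero =>
    have h1 : {e : D | tl e = v ∧ ¬ hd e ∈ Up tl hd s η 0} =
        {e : D | tl e = v ∧ hd e ∈ Bp tl hd s η 0} := by
      ext e
      simp [Up, Bp]
    have := hS v hvs
    rw [hP, ← h1, ← hnB]
    omega
  | succ k' =>
    have hup : η v < Set.ncard {e : D | tl e = v ∧ hd e ∈ Up tl hd s η k'} := hv.1.2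
    have heq : {e : D | tl e = v ∧ hd e ∈ Up tl hd s η k'} =
        {e : D | tl e = v ∧ (hd e ∈ Up tl hd s η (k' + 1) ∨ hd e ∈ Bp tl hd s η (k' + 1))} := by
      ext e
      rw [Set.mem_setOf_eq, Set.mem_setOf_eq, mem_Up_iff_or]
    rw [heq, ncard_cond_split2 tl hd v (fun w => w ∈ Up tl hd s η (k' + 1))
      (fun w => w ∈ Bp tl hd s η (k' + 1))
      (fun w h1 h2 => notMem_Up_of_mem_Bp tl hd s η h2 h1)] at hup
    rw [hP]
    omega

variable (α : Vp → Set D → ℕ → D → ℕ)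

/-- The defining property of the Majumdar–Dhar edge at `x`. -/
def MDprop (x : Vp) (e : D) : Prop :=
  ∃ i, 1 ≤ i ∧ x ∈ Bp tl hd s η i ∧ e ∈ PsetB tl hd s η i x ∧
    α x (PsetB tl hd s η i x) (degD tl x - nBefore tl hd s η i x) e = η x

open Classical in
/-- The Majumdar–Dhar map, with fallback `fb`. -/
def sigmaMD (fb : {x : Vp // x ≠ s} → D) (η : Vp → ℕ) : {x : Vp // x ≠ s} → D :=
  fun x => if h : ∃ e, MDprop tl hd s η α x.val e then h.choose else fb x

lemma tl_of_MDprop {x : Vp} {e : D} (h : MDprop tl hd s η α x e) : tl e = x := by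
  obtain ⟨i, -, -, he, -⟩ := h
  exact he.1

lemma exists_MDprop
    (hα : ∀ (x : Vp) (P : Set D) (j : ℕ), P.Nonempty → (∀ e ∈ P, tl e = x) →
      Set.BijOn (α x P j) P (Set.Ico j (j + P.ncard)))
    (hS : StableD tl s η) {k : ℕ} {x : Vp} (hx : x ∈ Bp tl hd s η (k + 1)) :
    ∃ e, MDprop tl hd s η α x e ∧ e ∈ PsetB tl hd s η (k + 1) x := by
  obtain ⟨hA1, hA2, hA3⟩ := key_count tl hd s η hS hx
  set P := PsetB tl hd s η (k + 1) x with hPdef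
  set c := Set.ncard {e : D | tl e = x ∧ hd e ∈ Up tl hd s η k} with hcdef
  have hj : degD tl x - nBefore tl hd s η (k + 1) x = c := by omega
  have hPne : P.Nonempty := by
    rw [← Set.ncard_pos (Set.toFinite _)]
    omega
  have htls : ∀ e ∈ P, tl e = x := fun e he => he.1
  have hbij := hα x P c hPne htls
  obtain ⟨e, heP, heα⟩ := hbij.surjOn (Set.mem_Ico.mpr ⟨hA2, hA3⟩)
  exact ⟨e, ⟨k + 1, by omega, hx, heP, by rw [hj]; exact heα⟩, heP⟩

lemma MDprop_unique
    (hα : ∀ (x : Vp) (P : Set D) (j : ℕ), P.Nonempty → (∀ e ∈ P, tl e = x) →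
      Set.BijOn (α x P j) P (Set.Ico j (j + P.ncard)))
    {x : Vp} {e e' : D} (he : MDprop tl hd s η α x e) (he' : MDprop tl hd s η α x e') :
    e = e' := by
  obtain ⟨i, hi1, hxi, heP, heα⟩ := he
  obtain ⟨i', hi1', hxi', heP', heα'⟩ := he'
  obtain rfl : i = i' := burn_unique tl hd s η hi1 hi1' hxi hxi'
  have hPne : (PsetB tl hd s η i x).Nonempty := ⟨e, heP⟩
  have hbij := hα x (PsetB tl hd s η i x) (degD tl x - nBefore tl hd s η i x) hPne
    (fun e he => he.1)
  exact hbij.injOn heP heP' (heα.trans heα'.symm)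

lemma sigmaMD_spec {fb : {x : Vp // x ≠ s} → D} {x : {x : Vp // x ≠ s}}
    (h : ∃ e, MDprop tl hd s η α x.val e) :
    MDprop tl hd s η α x.val (sigmaMD tl hd s α fb η x) := by
  classical
  rw [sigmaMD]
  rw [dif_pos h]
  exact h.choose_spec

lemma sigmaMD_isMDTree
    (hα : ∀ (x : Vp) (P : Set D) (j : ℕ), P.Nonempty → (∀ e ∈ P, tl e = x) →
      Set.BijOn (α x P j) P (Set.Ico j (j + P.ncard)))
    (hS : StableD tl s η) (fb : {x : Vp // x ≠ s} → D) :
    IsMDTree tl hd s α η (sigmaMD tl hd s α fb η) := by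
  intro i hi x hx
  obtain ⟨k, rfl⟩ := Nat.exists_eq_add_of_le' hi
  obtain ⟨e, he, -⟩ := exists_MDprop tl hd s η α hα hS hx
  have hspec := sigmaMD_spec tl hd s η α (fb := fb) (x := x) ⟨e, he⟩
  obtain ⟨i', hi1', hxi', heP', heα'⟩ := hspec
  obtain rfl : i' = k + 1 := burn_unique tl hd s η hi1' hi hxi' hx
  exact ⟨heP', heα'⟩

lemma sigmaMD_reach
    (hα : ∀ (x : Vp) (P : Set D) (j : ℕ), P.Nonempty → (∀ e ∈ P, tl e = x) →
      Set.BijOn (α x P j) P (Set.Ico j (j + P.ncard)))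
    (hS : StableD tl s η) (fb : {x : Vp // x ≠ s} → D) :
    ∀ i : ℕ, ∀ x : Vp, x ∈ Bp tl hd s η i →
      Relation.ReflTransGen
        (fun u w => ∃ h : u ≠ s, hd (sigmaMD tl hd s α fb η ⟨u, h⟩) = w) x s := by
  intro i
  induction i using Nat.strong_induction_on with
  | _ i ih =>
    intro x hx
    cases i with
    | zero =>
      obtain rfl : x = s := hx
      exact Relation.ReflTransGen.refl
    | succ k =>
      have hxs : x ≠ s := ne_s_of_mem_Bp tl hd s η (by omega) hx
      obtain ⟨e, he, -⟩ := exists_MDprop tl hd s η α hα hS hx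
      have hspec := sigmaMD_spec tl hd s η α (fb := fb) (x := ⟨x, hxs⟩) ⟨e, he⟩
      obtain ⟨i', hi1', hxi', heP', heα'⟩ := hspec
      obtain rfl : i' = k + 1 := burn_unique tl hd s η hi1' (by omega) hxi' hx
      have hhd : hd (sigmaMD tl hd s α fb η ⟨x, hxs⟩) ∈ Bp tl hd s η k := by
        have := heP'.2
        simpa using this
      exact Relation.ReflTransGen.head ⟨hxs, rfl⟩ (ih k (by omega) _ hhd)

lemma sigmaMD_isSpanTree
    (hα : ∀ (x : Vp) (P : Set D) (j : ℕ), P.Nonempty → (∀ e ∈ P, tl e = x) →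
      Set.BijOn (α x P j) P (Set.Ico j (j + P.ncard)))
    (hS : StableD tl s η) (hA : AllowedD tl hd s η) (fb : {x : Vp // x ≠ s} → D) :
    IsSpanTreeMap tl hd s (sigmaMD tl hd s α fb η) := by
  constructor
  · intro x
    obtain ⟨i, hi1, hxi⟩ := burn_exists tl hd s η hA x.prop
    obtain ⟨k, rfl⟩ := Nat.exists_eq_add_of_le' hi1
    obtain ⟨e, he, -⟩ := exists_MDprop tl hd s η α hα hS hxi
    exact tl_of_MDprop tl hd s η α (sigmaMD_spec tl hd s η α (fb := fb) (x := x) ⟨e, he⟩)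
  · intro v
    by_cases hv : v = s
    · subst hv
      exact Relation.ReflTransGen.refl
    · obtain ⟨i, hi1, hxi⟩ := burn_exists tl hd s η hA hv
      exact sigmaMD_reach tl hd s η α hα hS fb i v hxi

/-! ### Depth machinery for a spanning tree map -/

open Classical in
/-- Parent map of a tree map. -/
def par (t : {x : Vp // x ≠ s} → D) : Vp → Vp :=
  fun v => if h : v = s then s else hd (t ⟨v, h⟩)

lemma par_ne (t : {x : Vp // x ≠ s} → D) {v : Vp} (h : v ≠ s) :
    par hd s t v = hd (t ⟨v, h⟩) := by
  classical
  rw [par]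
  rw [dif_neg h]

lemma reach_of_span {t : {x : Vp // x ≠ s} → D} (ht : IsSpanTreeMap tl hd s t) (v : Vp) :
    ∃ n, (par hd s t)^[n] v = s := by
  have h := ht.2 v
  induction h using Relation.ReflTransGen.head_induction_on with
  | refl => exact ⟨0, rfl⟩
  | head hstep _ ih =>
    obtain ⟨n, hn⟩ := ih
    obtain ⟨hne, heq⟩ := hstep
    refine ⟨n + 1, ?_⟩
    rw [Function.iterate_succ_apply, par_ne hd s t hne, heq, hn]

open Classical in
/-- Depth of a vertex in the tree (distance to the sink along tree edges). -/
def dep (t : {x : Vp // x ≠ s} → D) : Vp → ℕ :=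
  fun v => if h : ∃ n, (par hd s t)^[n] v = s then Nat.find h else 0

lemma dep_s (t : {x : Vp // x ≠ s} → D) : dep hd s t s = 0 := by
  classical
  rw [dep]
  split
  · next h => exact (Nat.find_eq_zero h).mpr rfl
  · rfl

lemma eq_s_of_dep_zero {t : {x : Vp // x ≠ s} → D} (ht : IsSpanTreeMap tl hd s t)
    {v : Vp} (h : dep hd s t v = 0) : v = s := by
  classical
  have hex := reach_of_span tl hd s ht v
  rw [dep, dif_pos hex] at h
  have := Nat.find_spec hex
  rw [h] at this
  exact this

lemma dep_succ {t : {x : Vp // x ≠ s} → D} (ht : IsSpanTreeMap tl hd s t)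
    {v : Vp} (hv : v ≠ s) :
    dep hd s t v = dep hd s t (par hd s t v) + 1 := by
  classical
  have hex := reach_of_span tl hd s ht v
  have hexp := reach_of_span tl hd s ht (par hd s t v)
  simp only [dep]
  rw [dif_pos hex, dif_pos hexp]
  have h0 : Nat.find hex ≠ 0 := by
    intro h
    have := Nat.find_spec hex
    rw [h] at this
    exact hv this
  obtain ⟨m, hm⟩ := Nat.exists_eq_add_of_le' (Nat.one_le_iff_ne_zero.mpr h0)
  have hspec := Nat.find_spec hex
  rw [hm, Function.iterate_succ_apply] at hspec
  have h1 : Nat.find hexp ≤ m := Nat.find_le (h := hexp) hspec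
  have hspec2 := Nat.find_spec hexp
  have h2 : Nat.find hex ≤ Nat.find hexp + 1 := by
    apply Nat.find_le (h := hex)
    rw [Function.iterate_succ_apply]
    exact hspec2
  omega

lemma dep_hd {t : {x : Vp // x ≠ s} → D} (ht : IsSpanTreeMap tl hd s t)
    (x : {x : Vp // x ≠ s}) :
    dep hd s t x.val = dep hd s t (hd (t x)) + 1 := by
  have := dep_succ tl hd s ht x.prop
  rwa [par_ne hd s t x.prop] at this

lemma dep_zero_iff {t : {x : Vp // x ≠ s} → D} (ht : IsSpanTreeMap tl hd s t)
    {v : Vp} : dep hd s t v = 0 ↔ v = s :=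
  ⟨eq_s_of_dep_zero tl hd s ht, fun h => h ▸ dep_s hd s t⟩

/-! ### The inverse configuration -/

open Classical in
/-- The configuration associated to a spanning tree map. -/
def etaOf (t : {x : Vp // x ≠ s} → D) : Vp → ℕ :=
  fun v =>
    if h : v = s then 0 else
      α v {e : D | tl e = v ∧ dep hd s t (hd e) = dep hd s t v - 1}
        (degD tl v - Set.ncard {e : D | tl e = v ∧ dep hd s t (hd e) < dep hd s t v})
        (t ⟨v, h⟩)

lemma etaOf_s (t : {x : Vp // x ≠ s} → D) : etaOf tl hd s α t s = 0 := by
  rw [etaOf, dif_pos rfl]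

lemma etaOf_key
    (hα : ∀ (x : Vp) (P : Set D) (j : ℕ), P.Nonempty → (∀ e ∈ P, tl e = x) →
      Set.BijOn (α x P j) P (Set.Ico j (j + P.ncard)))
    {t : {x : Vp // x ≠ s} → D} (ht : IsSpanTreeMap tl hd s t)
    {v : Vp} (hv : v ≠ s) :
    Set.ncard {e : D | tl e = v ∧ ¬ dep hd s t (hd e) < dep hd s t v} ≤
      etaOf tl hd s α t v ∧
    etaOf tl hd s α t v <
      Set.ncard {e : D | tl e = v ∧ ¬ dep hd s t (hd e) < dep hd s t v} +
      Set.ncard {e : D | tl e = v ∧ dep hd s t (hd e) = dep hd s t v - 1} ∧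
    Set.ncard {e : D | tl e = v ∧ dep hd s t (hd e) = dep hd s t v - 1} +
      Set.ncard {e : D | tl e = v ∧ ¬ dep hd s t (hd e) < dep hd s t v} ≤ degD tl v := by
  have hi1 : 1 ≤ dep hd s t v := by
    rcases Nat.eq_zero_or_pos (dep hd s t v) with h0 | h
    · exact absurd (eq_s_of_dep_zero tl hd s ht h0) hv
    · exact h
  set i := dep hd s t v with hidef
  set Pt := {e : D | tl e = v ∧ dep hd s t (hd e) = i - 1} with hPt
  set Nt := {e : D | tl e = v ∧ dep hd s t (hd e) < i} with hNt
  set Ct := {e : D | tl e = v ∧ ¬ dep hd s t (hd e) < i} with hCt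
  have hsplit : degD tl v = Nt.ncard + Ct.ncard :=
    ncard_cond_split tl hd v (fun w => dep hd s t w < i)
  have hPN : Pt ⊆ Nt := by
    rintro e ⟨h1, h2⟩
    exact ⟨h1, by omega⟩
  have hPNle : Pt.ncard ≤ Nt.ncard := Set.ncard_le_ncard hPN (Set.toFinite _)
  have htmem : t ⟨v, hv⟩ ∈ Pt := by
    refine ⟨ht.1 _, ?_⟩
    have := dep_hd tl hd s ht ⟨v, hv⟩
    simp only at this
    omega
  have hbij := hα v Pt (degD tl v - Nt.ncard) ⟨_, htmem⟩ (fun e he => he.1)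
  have hval : etaOf tl hd s α t v = α v Pt (degD tl v - Nt.ncard) (t ⟨v, hv⟩) := by
    rw [etaOf, dif_neg hv]
  have hmem := hbij.mapsTo htmem
  rw [← hval, Set.mem_Ico] at hmem
  have hj : degD tl v - Nt.ncard = Ct.ncard := by omega
  refine ⟨by omega, by omega, by omega⟩

lemma etaOf_stable
    (hα : ∀ (x : Vp) (P : Set D) (j : ℕ), P.Nonempty → (∀ e ∈ P, tl e = x) →
      Set.BijOn (α x P j) P (Set.Ico j (j + P.ncard)))
    {t : {x : Vp // x ≠ s} → D} (ht : IsSpanTreeMap tl hd s t) :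
    StableD tl s (etaOf tl hd s α t) := by
  intro v hv
  obtain ⟨h1, h2, h3⟩ := etaOf_key tl hd s α hα ht hv
  omega

lemma etaOf_allowed
    (hα : ∀ (x : Vp) (P : Set D) (j : ℕ), P.Nonempty → (∀ e ∈ P, tl e = x) →
      Set.BijOn (α x P j) P (Set.Ico j (j + P.ncard)))
    {t : {x : Vp // x ≠ s} → D} (ht : IsSpanTreeMap tl hd s t) :
    AllowedD tl hd s (etaOf tl hd s α t) := by
  intro F hFne hFs hforb
  obtain ⟨v, hvF, hvmin⟩ := Set.exists_min_image F (dep hd s t) (Set.toFinite F) hFne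
  obtain ⟨h1, -, -⟩ := etaOf_key tl hd s α hα ht (hFs v hvF)
  have hsub : {e : D | tl e = v ∧ hd e ∈ F} ⊆
      {e : D | tl e = v ∧ ¬ dep hd s t (hd e) < dep hd s t v} := by
    rintro e ⟨he1, he2⟩
    exact ⟨he1, not_lt.mpr (hvmin _ he2)⟩
  have := Set.ncard_le_ncard hsub (Set.toFinite _)
  have := hforb v hvF
  omega

lemma Up_etaOf
    (hα : ∀ (x : Vp) (P : Set D) (j : ℕ), P.Nonempty → (∀ e ∈ P, tl e = x) →
      Set.BijOn (α x P j) P (Set.Ico j (j + P.ncard)))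
    {t : {x : Vp // x ≠ s} → D} (ht : IsSpanTreeMap tl hd s t) :
    ∀ n, Up tl hd s (etaOf tl hd s α t) n = {v | n < dep hd s t v} := by
  intro n
  induction n with
  | zero =>
    ext v
    simp only [Up, Set.mem_setOf_eq]
    constructor
    · intro h
      exact Nat.pos_of_ne_zero (fun h0 => h (eq_s_of_dep_zero tl hd s ht h0))
    · intro h hs
      rw [hs, dep_s] at h
      omega
  | succ n ihn =>
    ext v
    rw [mem_Up_succ, ihn]
    simp only [Set.mem_setOf_eq]
    constructor
    · rintro ⟨h1, h2⟩
      by_contra hc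
      have hdv : dep hd s t v = n + 1 := by omega
      have hvs : v ≠ s := by
        intro hs
        rw [hs, dep_s] at hdv
        omega
      obtain ⟨hk1, -, -⟩ := etaOf_key tl hd s α hα ht hvs
      have hseteq : {e : D | tl e = v ∧ n < dep hd s t (hd e)} =
          {e : D | tl e = v ∧ ¬ dep hd s t (hd e) < dep hd s t v} := by
        ext e
        simp only [Set.mem_setOf_eq, hdv]
        constructor
        · rintro ⟨a, b⟩; exact ⟨a, by omega⟩
        · rintro ⟨a, b⟩; exact ⟨a, by omega⟩
      rw [hseteq] at h2
      omega
    · intro h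
      have hvs : v ≠ s := by
        intro hs
        rw [hs, dep_s] at h
        omega
      obtain ⟨-, hk2, -⟩ := etaOf_key tl hd s α hα ht hvs
      refine ⟨show n < dep hd s t v by omega, ?_⟩
      have hsplit : Set.ncard {e : D | tl e = v ∧
          (¬ dep hd s t (hd e) < dep hd s t v ∨ dep hd s t (hd e) = dep hd s t v - 1)} =
          Set.ncard {e : D | tl e = v ∧ ¬ dep hd s t (hd e) < dep hd s t v} +
          Set.ncard {e : D | tl e = v ∧ dep hd s t (hd e) = dep hd s t v - 1} :=
        ncard_cond_split2 tl hd v (fun w => ¬ dep hd s t w < dep hd s t v)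
          (fun w => dep hd s t w = dep hd s t v - 1) (fun w hw1 hw2 => by omega)
      have hsub : {e : D | tl e = v ∧
          (¬ dep hd s t (hd e) < dep hd s t v ∨ dep hd s t (hd e) = dep hd s t v - 1)} ⊆
          {e : D | tl e = v ∧ n < dep hd s t (hd e)} := by
        rintro e ⟨he1, he2⟩
        refine ⟨he1, ?_⟩
        rcases he2 with h' | h' <;> omega
      have hle := Set.ncard_le_ncard hsub (Set.toFinite _)
      omega

lemma Bp_etaOf
    (hα : ∀ (x : Vp) (P : Set D) (j : ℕ), P.Nonempty → (∀ e ∈ P, tl e = x) →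
      Set.BijOn (α x P j) P (Set.Ico j (j + P.ncard)))
    {t : {x : Vp // x ≠ s} → D} (ht : IsSpanTreeMap tl hd s t) :
    ∀ n, Bp tl hd s (etaOf tl hd s α t) n = {v | dep hd s t v = n} := by
  intro n
  cases n with
  | zero =>
    ext v
    simp only [Bp, Set.mem_singleton_iff, Set.mem_setOf_eq]
    exact ⟨fun h => h ▸ dep_s hd s t, fun h => eq_s_of_dep_zero tl hd s ht h⟩
  | succ n =>
    ext v
    rw [mem_Bp_succ]
    simp only [Set.mem_setOf_eq]
    constructor
    · rintro ⟨h1, h2⟩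
      have hn : n < dep hd s t v := by
        have := Up_etaOf tl hd s α hα ht n
        rw [this] at h1
        exact h1
      have hn2 : ¬ (n + 1 < dep hd s t v) := by
        intro hc
        have hmem : v ∈ Up tl hd s (etaOf tl hd s α t) (n + 1) := by
          rw [Up_etaOf tl hd s α hα ht (n + 1)]
          exact hc
        exact absurd hmem.2 (not_lt.mpr h2)
      omega
    · intro h
      have h1 : v ∈ Up tl hd s (etaOf tl hd s α t) n := by
        rw [Up_etaOf tl hd s α hα ht n]
        simp only [Set.mem_setOf_eq]
        omega
      refine ⟨h1, ?_⟩
      by_contra hlt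
      have hmem : v ∈ Up tl hd s (etaOf tl hd s α t) (n + 1) := ⟨h1, not_le.mp hlt⟩
      rw [Up_etaOf tl hd s α hα ht (n + 1)] at hmem
      simp only [Set.mem_setOf_eq] at hmem
      omega

lemma MDprop_etaOf
    (hα : ∀ (x : Vp) (P : Set D) (j : ℕ), P.Nonempty → (∀ e ∈ P, tl e = x) →
      Set.BijOn (α x P j) P (Set.Ico j (j + P.ncard)))
    {t : {x : Vp // x ≠ s} → D} (ht : IsSpanTreeMap tl hd s t)
    (x : {x : Vp // x ≠ s}) :
    MDprop tl hd s (etaOf tl hd s α t) α x.val (t x) := by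
  set i := dep hd s t x.val with hidef
  have hi1 : 1 ≤ i := by
    rcases Nat.eq_zero_or_pos i with h0 | h
    · exact absurd (eq_s_of_dep_zero tl hd s ht h0) x.prop
    · exact h
  have hPeq : PsetB tl hd s (etaOf tl hd s α t) i x.val =
      {e : D | tl e = x.val ∧ dep hd s t (hd e) = i - 1} := by
    rw [PsetB, Bp_etaOf tl hd s α hα ht (i - 1)]
    rfl
  have hNeq : nBefore tl hd s (etaOf tl hd s α t) i x.val =
      Set.ncard {e : D | tl e = x.val ∧ dep hd s t (hd e) < i} := by
    rw [nBefore]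
    congr 1
    ext e
    rw [Set.mem_setOf_eq, Set.mem_setOf_eq, Up_etaOf tl hd s α hα ht (i - 1),
      Set.mem_setOf_eq]
    constructor
    · rintro ⟨a, b⟩; exact ⟨a, by omega⟩
    · rintro ⟨a, b⟩; exact ⟨a, by omega⟩
  refine ⟨i, hi1, ?_, ?_, ?_⟩
  · rw [Bp_etaOf tl hd s α hα ht i]
    exact hidef.symm ▸ rfl
  · rw [hPeq]
    refine ⟨ht.1 x, ?_⟩
    have := dep_hd tl hd s ht x
    omega
  · rw [hPeq, hNeq]
    have hval : etaOf tl hd s α t x.val =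
        α x.val {e : D | tl e = x.val ∧ dep hd s t (hd e) = i - 1}
          (degD tl x.val -
            Set.ncard {e : D | tl e = x.val ∧ dep hd s t (hd e) < i}) (t x) := by
      rw [etaOf, dif_neg x.prop]
    rw [hval]

lemma sigmaMD_etaOf
    (hα : ∀ (x : Vp) (P : Set D) (j : ℕ), P.Nonempty → (∀ e ∈ P, tl e = x) →
      Set.BijOn (α x P j) P (Set.Ico j (j + P.ncard)))
    {t : {x : Vp // x ≠ s} → D} (ht : IsSpanTreeMap tl hd s t)
    (fb : {x : Vp // x ≠ s} → D) :
    sigmaMD tl hd s α fb (etaOf tl hd s α t) = t := by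
  funext x
  have h := MDprop_etaOf tl hd s α hα ht x
  have hspec := sigmaMD_spec tl hd s (etaOf tl hd s α t) α (fb := fb) (x := x) ⟨t x, h⟩
  exact MDprop_unique tl hd s (etaOf tl hd s α t) α hα hspec h

lemma dep_sigmaMD
    (hα : ∀ (x : Vp) (P : Set D) (j : ℕ), P.Nonempty → (∀ e ∈ P, tl e = x) →
      Set.BijOn (α x P j) P (Set.Ico j (j + P.ncard)))
    (hS : StableD tl s η) (hA : AllowedD tl hd s η) (fb : {x : Vp // x ≠ s} → D) :
    ∀ i : ℕ, ∀ v : Vp, v ∈ Bp tl hd s η i →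
      dep hd s (sigmaMD tl hd s α fb η) v = i := by
  have ht' := sigmaMD_isSpanTree tl hd s η α hα hS hA fb
  intro i
  induction i using Nat.strong_induction_on with
  | _ i ih =>
    intro v hv
    cases i with
    | zero =>
      have hv' : v = s := hv
      rw [hv']
      exact dep_s hd s _
    | succ k =>
      have hvs : v ≠ s := ne_s_of_mem_Bp tl hd s η (by omega) hv
      obtain ⟨e, he, -⟩ := exists_MDprop tl hd s η α hα hS hv
      have hspec := sigmaMD_spec tl hd s η α (fb := fb) (x := ⟨v, hvs⟩) ⟨e, he⟩
      obtain ⟨i', hi1', hxi', heP', -⟩ := hspec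
      obtain rfl : i' = k + 1 := burn_unique tl hd s η hi1' (by omega) hxi' hv
      have hhd : hd (sigmaMD tl hd s α fb η ⟨v, hvs⟩) ∈ Bp tl hd s η k := heP'.2
      have hdd : dep hd s (sigmaMD tl hd s α fb η) v =
          dep hd s (sigmaMD tl hd s α fb η) (hd (sigmaMD tl hd s α fb η ⟨v, hvs⟩)) + 1 :=
        dep_hd tl hd s ht' ⟨v, hvs⟩
      have hih := ih k (by omega) _ hhd
      omega

lemma mem_Up_iff_dep
    (hα : ∀ (x : Vp) (P : Set D) (j : ℕ), P.Nonempty → (∀ e ∈ P, tl e = x) →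
      Set.BijOn (α x P j) P (Set.Ico j (j + P.ncard)))
    (hS : StableD tl s η) (hA : AllowedD tl hd s η) (fb : {x : Vp // x ≠ s} → D)
    {n : ℕ} {v : Vp} :
    v ∈ Up tl hd s η n ↔ n < dep hd s (sigmaMD tl hd s α fb η) v := by
  by_cases hvs : v = s
  · rw [hvs, dep_s]
    simp only [Nat.not_lt_zero, iff_false]
    exact fun h => (ne_s_of_mem_Up tl hd s η h) rfl
  · obtain ⟨i, hi1, hvi⟩ := burn_exists tl hd s η hA hvs
    obtain ⟨k, rfl⟩ := Nat.exists_eq_add_of_le' hi1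
    have hdep := dep_sigmaMD tl hd s η α hα hS hA fb (k + 1) v hvi
    rw [hdep]
    constructor
    · intro h
      by_contra hc
      exact notMem_Up_of_mem_Bp tl hd s η hvi (Up_antitone tl hd s η (by omega) h)
    · intro h
      exact Up_antitone tl hd s η (by omega) hvi.1

lemma mem_Bp_iff_dep
    (hα : ∀ (x : Vp) (P : Set D) (j : ℕ), P.Nonempty → (∀ e ∈ P, tl e = x) →
      Set.BijOn (α x P j) P (Set.Ico j (j + P.ncard)))
    (hS : StableD tl s η) (hA : AllowedD tl hd s η) (fb : {x : Vp // x ≠ s} → D)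
    {n : ℕ} {v : Vp} :
    v ∈ Bp tl hd s η n ↔ dep hd s (sigmaMD tl hd s α fb η) v = n := by
  constructor
  · exact dep_sigmaMD tl hd s η α hα hS hA fb n v
  · intro h
    by_cases hvs : v = s
    · rw [hvs, dep_s] at h
      rw [← h]
      exact hvs
    · obtain ⟨i, hi1, hvi⟩ := burn_exists tl hd s η hA hvs
      have := dep_sigmaMD tl hd s η α hα hS hA fb i v hvi
      rw [h] at this
      exact this ▸ hvi

lemma etaOf_sigmaMD
    (hα : ∀ (x : Vp) (P : Set D) (j : ℕ), P.Nonempty → (∀ e ∈ P, tl e = x) →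
      Set.BijOn (α x P j) P (Set.Ico j (j + P.ncard)))
    (h0 : η s = 0) (hS : StableD tl s η) (hA : AllowedD tl hd s η)
    (fb : {x : Vp // x ≠ s} → D) :
    etaOf tl hd s α (sigmaMD tl hd s α fb η) = η := by
  have ht' := sigmaMD_isSpanTree tl hd s η α hα hS hA fb
  funext v
  by_cases hvs : v = s
  · subst hvs
    rw [etaOf_s, h0]
  · set t' := sigmaMD tl hd s α fb η with ht'def
    set i := dep hd s t' v with hidef
    have hi1 : 1 ≤ i := by
      rcases Nat.eq_zero_or_pos i with hc | hp
      · exact absurd (eq_s_of_dep_zero tl hd s ht' hc) hvs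
      · exact hp
    have hvB : v ∈ Bp tl hd s η i :=
      (mem_Bp_iff_dep tl hd s η α hα hS hA fb).mpr hidef.symm
    have hPeq : {e : D | tl e = v ∧ dep hd s t' (hd e) = i - 1} =
        PsetB tl hd s η i v := by
      rw [PsetB]
      ext e
      rw [Set.mem_setOf_eq, Set.mem_setOf_eq,
        mem_Bp_iff_dep tl hd s η α hα hS hA fb]
    have hNeq : Set.ncard {e : D | tl e = v ∧ dep hd s t' (hd e) < i} =
        nBefore tl hd s η i v := by
      rw [nBefore]
      congr 1
      ext e
      rw [Set.mem_setOf_eq, Set.mem_setOf_eq]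
      constructor
      · rintro ⟨a, b⟩
        refine ⟨a, fun hc => ?_⟩
        rw [mem_Up_iff_dep tl hd s η α hα hS hA fb, ← ht'def] at hc
        omega
      · rintro ⟨a, b⟩
        refine ⟨a, ?_⟩
        by_contra hc
        have hmem : hd e ∈ Up tl hd s η (i - 1) := by
          rw [mem_Up_iff_dep tl hd s η α hα hS hA fb, ← ht'def]
          omega
        exact b hmem
    have hval : etaOf tl hd s α t' v =
        α v {e : D | tl e = v ∧ dep hd s t' (hd e) = i - 1}
          (degD tl v - Set.ncard {e : D | tl e = v ∧ dep hd s t' (hd e) < i})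
          (t' ⟨v, hvs⟩) := by
      rw [etaOf, dif_neg hvs]
    rw [hval, hPeq, hNeq]
    exact (sigmaMD_isMDTree tl hd s η α hα hS fb i hi1 ⟨v, hvs⟩ hvB).2

end MDaux

/-- the Majumdar–Dhar map `σ_G` is a bijection between the set `A_G` of
allowed stable configurations (normalized to vanish at the sink) and the set `T_G` of
spanning trees of the finite connected multigraph `G` with sink `s`. -/
theorem stmt_8 {Vp D : Type*} [Fintype Vp] [Fintype D]
    (tl hd : D → Vp) (rev : D → D)
    (hrev : ∀ e : D, tl (rev e) = hd e ∧ hd (rev e) = tl e ∧ rev (rev e) = e)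
    (hloop : ∀ e : D, tl e ≠ hd e)
    (s : Vp)
    (hconn : ∀ v : Vp,
      Relation.ReflTransGen (fun u w => ∃ e : D, tl e = u ∧ hd e = w) v s)
    (α : Vp → Set D → ℕ → D → ℕ)
    (hα : ∀ (x : Vp) (P : Set D) (j : ℕ), P.Nonempty → (∀ e ∈ P, tl e = x) →
      Set.BijOn (α x P j) P (Set.Ico j (j + P.ncard))) :
    ∃ σ : (Vp → ℕ) → ({x : Vp // x ≠ s} → D),
      (∀ η : Vp → ℕ,
        η ∈ {η : Vp → ℕ | η s = 0 ∧ StableD tl s η ∧ AllowedD tl hd s η} →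
        IsMDTree tl hd s α η (σ η)) ∧
      Set.BijOn σ
        {η : Vp → ℕ | η s = 0 ∧ StableD tl s η ∧ AllowedD tl hd s η}
        {t : {x : Vp // x ≠ s} → D | IsSpanTreeMap tl hd s t} := by
  classical
  have hfb : ∀ x : {x : Vp // x ≠ s}, ∃ e : D, tl e = x.val := by
    intro x
    rcases (Relation.ReflTransGen.cases_head (hconn x.val)) with h | ⟨w, ⟨e, he1, he2⟩, h2⟩
    · exact absurd h x.prop
    · exact ⟨e, he1⟩
  set fb : {x : Vp // x ≠ s} → D := fun x => (hfb x).choose with hfbdef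
  refine ⟨MDaux.sigmaMD tl hd s α fb, ?_, ?_⟩
  · rintro η ⟨h0, hS, hA⟩
    exact MDaux.sigmaMD_isMDTree tl hd s η α hα hS fb
  · apply Set.InvOn.bijOn (f' := fun t => MDaux.etaOf tl hd s α t)
    · constructor
      · rintro η ⟨h0, hS, hA⟩
        exact MDaux.etaOf_sigmaMD tl hd s η α hα h0 hS hA fb
      · rintro t ht
        exact MDaux.sigmaMD_etaOf tl hd s α hα ht fb
    · rintro η ⟨h0, hS, hA⟩
      exact MDaux.sigmaMD_isSpanTree tl hd s η α hα hS hA fb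
    · rintro t ht
      exact ⟨MDaux.etaOf_s tl hd s α t, MDaux.etaOf_stable tl hd s α hα ht,
        MDaux.etaOf_allowed tl hd s α hα ht⟩
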